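/- Let X be a real random variable with E[X] = 0, E[X^2] = sigma^2 > 0, and E[X^4] <= c * (E[X^2])^2 for some constant c > 0. Then P(X > sigma/(2*sqrt(c))) > 0. -/

import Mathlib

open MeasureTheory

lemma cs_sq {Ω : Type*} [MeasurableSpace Ω] (μ : Measure Ω) (f g : Ω → ℝ)
    (hf0 : ∀ ω, 0 ≤ f ω) (hg0 : ∀ ω, 0 ≤ g ω)
    (hfm : AEStronglyMeasurable f μ) (hgm : AEStronglyMeasurable g μ)
    (hf2 : Integrable (fun ω => f ω ^ 2) μ) (hg2 : Integrable (fun ω => g ω ^ 2) μ) :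
    (∫ ω, f ω * g ω ∂μ) ^ 2 ≤ (∫ ω, f ω ^ 2 ∂μ) * (∫ ω, g ω ^ 2 ∂μ) := by
  have hpq : Real.HolderConjugate 2 2 := by constructor <;> norm_num
  have hfL : MemLp f (ENNReal.ofReal 2) μ := by
    rw [show ENNReal.ofReal 2 = 2 by norm_num]
    exact (memLp_two_iff_integrable_sq hfm).2 hf2
  have hgL : MemLp g (ENNReal.ofReal 2) μ := by
    rw [show ENNReal.ofReal 2 = 2 by norm_num]
    exact (memLp_two_iff_integrable_sq hgm).2 hg2
  have h := integral_mul_le_Lp_mul_Lq_of_nonneg hpq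
    (Filter.Eventually.of_forall hf0) (Filter.Eventually.of_forall hg0) hfL hgL
  have hf2' : ∫ ω, f ω ^ (2:ℝ) ∂μ = ∫ ω, f ω ^ 2 ∂μ := by
    congr 1; ext ω; rw [← Real.rpow_natCast (f ω) 2]; norm_num
  have hg2' : ∫ ω, g ω ^ (2:ℝ) ∂μ = ∫ ω, g ω ^ 2 ∂μ := by
    congr 1; ext ω; rw [← Real.rpow_natCast (g ω) 2]; norm_num
  rw [hf2', hg2'] at h
  have hA : 0 ≤ ∫ ω, f ω ^ 2 ∂μ := integral_nonneg fun ω => sq_nonneg _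
  have hB : 0 ≤ ∫ ω, g ω ^ 2 ∂μ := integral_nonneg fun ω => sq_nonneg _
  have h' : (∫ ω, f ω * g ω ∂μ) ≤ Real.sqrt ((∫ ω, f ω ^ 2 ∂μ) * (∫ ω, g ω ^ 2 ∂μ)) := by
    rw [Real.sqrt_mul hA, Real.sqrt_eq_rpow, Real.sqrt_eq_rpow]
    convert h using 2
  have hnn : 0 ≤ ∫ ω, f ω * g ω ∂μ := integral_nonneg fun ω => mul_nonneg (hf0 ω) (hg0 ω)
  calc (∫ ω, f ω * g ω ∂μ) ^ 2 ≤ Real.sqrt ((∫ ω, f ω ^ 2 ∂μ) * (∫ ω, g ω ^ 2 ∂μ)) ^ 2 :=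
        pow_le_pow_left₀ hnn h' 2
    _ = _ := Real.sq_sqrt (mul_nonneg hA hB)

lemma key_arith (σ s u t a c : ℝ) (hσ : 0 < σ) (hc : 0 < c) (hc1 : 1 ≤ c)
    (hu0 : 0 ≤ u) (hs0 : 0 ≤ s) (ht0 : 0 ≤ t) (hua : u ≤ a) (ha0 : 0 < a)
    (hcs1 : s ^ 2 ≤ u * t) (hcs2 : t ^ 2 ≤ s * (c * σ ^ 4))
    (ha2 : a ^ 2 * (4 * c) = σ ^ 2) (hlow : σ ^ 2 ≤ a ^ 2 + s) : False := by
  have ha2' : a ^ 2 = σ ^ 2 / (4 * c) := by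
    rw [eq_div_iff (by positivity : (4:ℝ) * c ≠ 0)]; exact ha2
  have haq : a ^ 2 ≤ σ ^ 2 / 4 := by
    rw [ha2', div_le_div_iff₀ (by positivity) (by norm_num : (0:ℝ) < 4)]
    nlinarith [sq_nonneg σ]
  have hs_big : 3 * σ ^ 2 / 4 ≤ s := by linarith
  have h1' : s ^ 4 ≤ u ^ 2 * t ^ 2 := by nlinarith [hcs1, hu0, ht0, hs0, sq_nonneg s]
  have h2' : u ^ 2 ≤ a ^ 2 := by nlinarith [hua, hu0]
  have hs4 : s ^ 4 ≤ (σ ^ 2 / (4 * c)) * (s * (c * σ ^ 4)) := by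
    calc s ^ 4 ≤ u ^ 2 * t ^ 2 := h1'
      _ ≤ a ^ 2 * (s * (c * σ ^ 4)) := by
          have hnn : (0:ℝ) ≤ s * (c * σ ^ 4) := by positivity
          nlinarith [sq_nonneg u, sq_nonneg t]
      _ = (σ ^ 2 / (4 * c)) * (s * (c * σ ^ 4)) := by rw [ha2']
  have hs4' : s ^ 4 ≤ σ ^ 6 * s / 4 := by
    have he : (σ ^ 2 / (4 * c)) * (s * (c * σ ^ 4)) = σ ^ 6 * s / 4 := by
      field_simp
    linarith [hs4, he.le, he.ge]
  have hs_pos : 0 < s := lt_of_lt_of_le (by positivity) hs_big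
  have h3 : s ^ 3 ≤ σ ^ 6 / 4 := by nlinarith [hs_pos, hs4']
  have h4c : (3 * σ ^ 2 / 4) ^ 3 ≤ s ^ 3 := pow_le_pow_left₀ (by positivity) hs_big 3
  nlinarith [h3, h4c, pow_pos hσ 6]

lemma cube_le_aux (y : ℝ) (hy : 0 ≤ y) : y ^ 3 ≤ y ^ 2 + y ^ 4 := by
  nlinarith [sq_nonneg (y ^ 2 - y), sq_nonneg y]

lemma c_ge_one_aux (c σ E4 : ℝ) (hσ : 0 < σ) (hA : (σ ^ 2) ^ 2 ≤ E4)
    (hB : E4 ≤ c * σ ^ 4) : 1 ≤ c := by nlinarith [pow_pos hσ 4]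

theorem stmt2 {Ω : Type*} [MeasurableSpace Ω] (μ : Measure Ω) [IsProbabilityMeasure μ]
    (X : Ω → ℝ) (hX : Measurable X) (c σ : ℝ) (hc : 0 < c) (hσ : 0 < σ)
    (h1 : Integrable X μ)
    (h2 : Integrable (fun ω => (X ω) ^ 2) μ)
    (h4 : Integrable (fun ω => (X ω) ^ 4) μ)
    (hE : ∫ ω, X ω ∂μ = 0)
    (hE2 : ∫ ω, (X ω) ^ 2 ∂μ = σ ^ 2)
    (hE4 : ∫ ω, (X ω) ^ 4 ∂μ ≤ c * (∫ ω, (X ω) ^ 2 ∂μ) ^ 2) :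
    0 < μ {ω | σ / (2 * Real.sqrt c) < X ω} := by
  by_contra hcon
  push_neg at hcon
  obtain ⟨a, ha_def⟩ : ∃ x : ℝ, x = σ / (2 * Real.sqrt c) := ⟨_, rfl⟩
  rw [← ha_def] at hcon
  have hsc : 0 < Real.sqrt c := Real.sqrt_pos.2 hc
  have ha0 : 0 < a := ha_def ▸ div_pos hσ (by positivity)
  have h0 : μ {ω | a < X ω} = 0 := le_antisymm hcon zero_le
  have hae : ∀ᵐ ω ∂μ, X ω ≤ a := by
    rw [ae_iff]; simpa [not_le] using h0
  -- positive and negative parts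
  set P : Ω → ℝ := fun ω => max (X ω) 0 with hP_def
  set Y : Ω → ℝ := fun ω => max (-(X ω)) 0 with hY_def
  have hPm : Measurable P := hX.max measurable_const
  have hYm : Measurable Y := hX.neg.max measurable_const
  have hP0 : ∀ ω, 0 ≤ P ω := fun ω => le_max_right _ _
  have hY0 : ∀ ω, 0 ≤ Y ω := fun ω => le_max_right _ _
  have hPX : ∀ ω, P ω - Y ω = X ω := by
    intro ω
    show max (X ω) 0 - max (-(X ω)) 0 = X ω
    rcases le_total 0 (X ω) with h | h
    · rw [max_eq_left h, max_eq_right (neg_nonpos_of_nonneg h)]; ring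
    · rw [max_eq_right h, max_eq_left (neg_nonneg.mpr h)]; ring
  have hsq : ∀ ω, P ω ^ 2 + Y ω ^ 2 = X ω ^ 2 := by
    intro ω
    show max (X ω) 0 ^ 2 + max (-(X ω)) 0 ^ 2 = X ω ^ 2
    rcases le_total 0 (X ω) with h | h
    · rw [max_eq_left h, max_eq_right (neg_nonpos_of_nonneg h)]; ring
    · rw [max_eq_right h, max_eq_left (neg_nonneg.mpr h)]; ring
  have hYabs : ∀ ω, |Y ω| ≤ |X ω| := by
    intro ω; rw [abs_of_nonneg (hY0 ω)]
    exact max_le (neg_le_abs _) (abs_nonneg _)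
  have hPabs : ∀ ω, |P ω| ≤ |X ω| := by
    intro ω; rw [abs_of_nonneg (hP0 ω)]
    exact max_le (le_abs_self _) (abs_nonneg _)
  -- integrabilities
  have hYint : Integrable Y μ :=
    h1.abs.mono' hYm.aestronglyMeasurable (Filter.Eventually.of_forall fun ω => by
      simpa [abs_of_nonneg (hY0 ω)] using hYabs ω)
  have hPint : Integrable P μ :=
    h1.abs.mono' hPm.aestronglyMeasurable (Filter.Eventually.of_forall fun ω => by
      simpa [abs_of_nonneg (hP0 ω)] using hPabs ω)
  have hY2int : Integrable (fun ω => Y ω ^ 2) μ :=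
    h2.mono' (hYm.pow_const 2).aestronglyMeasurable (Filter.Eventually.of_forall fun ω => by
      rw [Real.norm_eq_abs, abs_of_nonneg (sq_nonneg _)]
      simpa [sq_abs] using pow_le_pow_left₀ (abs_nonneg _) (hYabs ω) 2)
  have hP2int : Integrable (fun ω => P ω ^ 2) μ :=
    h2.mono' (hPm.pow_const 2).aestronglyMeasurable (Filter.Eventually.of_forall fun ω => by
      rw [Real.norm_eq_abs, abs_of_nonneg (sq_nonneg _)]
      simpa [sq_abs] using pow_le_pow_left₀ (abs_nonneg _) (hPabs ω) 2)
  have hY4int : Integrable (fun ω => Y ω ^ 4) μ :=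
    h4.mono' (hYm.pow_const 4).aestronglyMeasurable (Filter.Eventually.of_forall fun ω => by
      rw [Real.norm_eq_abs, abs_of_nonneg (by positivity : (0:ℝ) ≤ Y ω ^ 4)]
      calc Y ω ^ 4 ≤ |X ω| ^ 4 := by
            simpa [abs_of_nonneg (hY0 ω)] using pow_le_pow_left₀ (abs_nonneg _) (hYabs ω) 4
        _ = X ω ^ 4 := by rw [← abs_pow, abs_of_nonneg (by positivity)])
  have hY3int : Integrable (fun ω => Y ω ^ 3) μ :=
    (hY2int.add hY4int).mono' (hYm.pow_const 3).aestronglyMeasurable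
      (Filter.Eventually.of_forall fun ω => by
        simp only [Pi.add_apply, Real.norm_eq_abs,
          abs_of_nonneg (by positivity : (0:ℝ) ≤ Y ω ^ 3)]
        exact cube_le_aux (Y ω) (hY0 ω))
  -- key integral facts
  obtain ⟨u, hu_def⟩ : ∃ x : ℝ, x = ∫ ω, Y ω ∂μ := ⟨_, rfl⟩
  obtain ⟨s, hs_def⟩ : ∃ x : ℝ, x = ∫ ω, Y ω ^ 2 ∂μ := ⟨_, rfl⟩
  obtain ⟨t, ht_def⟩ : ∃ x : ℝ, x = ∫ ω, Y ω ^ 3 ∂μ := ⟨_, rfl⟩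
  have hu0 : 0 ≤ u := hu_def ▸ integral_nonneg hY0
  have hs0 : 0 ≤ s := hs_def ▸ integral_nonneg fun ω => sq_nonneg _
  have ht0 : 0 ≤ t := ht_def ▸ integral_nonneg fun ω => by positivity
  have hPeqY : ∫ ω, P ω ∂μ = u := by
    have h' : ∫ ω, (P ω - Y ω) ∂μ = 0 := by
      rw [integral_congr_ae (Filter.Eventually.of_forall fun ω => hPX ω)]; exact hE
    rw [integral_sub hPint hYint] at h'
    rw [hu_def]; linarith
  have hPa : ∫ ω, P ω ∂μ ≤ a := by
    calc ∫ ω, P ω ∂μ ≤ ∫ _, a ∂μ := by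
          refine integral_mono_ae hPint (integrable_const a) ?_
          filter_upwards [hae] with ω hω
          exact max_le hω ha0.le
      _ = a := by simp [measure_univ]
  have hua : u ≤ a := hPeqY ▸ hPa
  have hP2a : ∫ ω, P ω ^ 2 ∂μ ≤ a * u := by
    calc ∫ ω, P ω ^ 2 ∂μ ≤ ∫ ω, a * P ω ∂μ := by
          refine integral_mono_ae hP2int (hPint.const_mul a) ?_
          filter_upwards [hae] with ω hω
          have hPa' : P ω ≤ a := max_le hω ha0.le
          calc P ω ^ 2 = P ω * P ω := sq (P ω)
            _ ≤ a * P ω := mul_le_mul_of_nonneg_right hPa' (hP0 ω)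
      _ = a * u := by rw [integral_const_mul, hPeqY]
  have hsplit : σ ^ 2 = ∫ ω, P ω ^ 2 ∂μ + s := by
    rw [hs_def, ← hE2, ← integral_add hP2int hY2int]
    exact (integral_congr_ae (Filter.Eventually.of_forall fun ω => (hsq ω).symm))
  -- c ≥ 1 via Cauchy-Schwarz with (X², 1)
  have hE4' : ∫ ω, X ω ^ 4 ∂μ ≤ c * σ ^ 4 := by
    calc ∫ ω, X ω ^ 4 ∂μ ≤ c * (∫ ω, X ω ^ 2 ∂μ) ^ 2 := hE4
      _ = c * σ ^ 4 := by rw [hE2]; ring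
  have hc1 : 1 ≤ c := by
    have h := cs_sq μ (fun ω => X ω ^ 2) (fun _ => 1) (fun ω => sq_nonneg _)
      (fun _ => zero_le_one) (hX.pow_const 2).aestronglyMeasurable
      aestronglyMeasurable_const
      (h4.congr (Filter.Eventually.of_forall fun ω => by
        show X ω ^ 4 = (X ω ^ 2) ^ 2; ring))
      (by simp)
    simp only [mul_one, one_pow] at h
    rw [hE2] at h
    simp only [integral_const, measure_univ, ENNReal.toReal_one, probReal_univ, smul_eq_mul, one_mul,
      mul_one] at h
    have h' : (σ ^ 2) ^ 2 ≤ ∫ ω, X ω ^ 4 ∂μ := by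
      refine le_trans h (le_of_eq ?_)
      exact integral_congr_ae (Filter.Eventually.of_forall fun ω => by
        show (X ω ^ 2) ^ 2 = X ω ^ 4; ring)
    exact c_ge_one_aux c σ _ hσ h' hE4'
  -- CS 1: s² ≤ u * t,  via (√Y, Y√Y)
  have hcs1 : s ^ 2 ≤ u * t := by
    have h := cs_sq μ (fun ω => Real.sqrt (Y ω)) (fun ω => Y ω * Real.sqrt (Y ω))
      (fun ω => Real.sqrt_nonneg _)
      (fun ω => mul_nonneg (hY0 ω) (Real.sqrt_nonneg _))
      (Real.continuous_sqrt.measurable.comp hYm).aestronglyMeasurable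
      (hYm.mul (Real.continuous_sqrt.measurable.comp hYm)).aestronglyMeasurable
      (hYint.congr (Filter.Eventually.of_forall fun ω => (Real.sq_sqrt (hY0 ω)).symm))
      (hY3int.congr (Filter.Eventually.of_forall fun ω => by
        show Y ω ^ 3 = (Y ω * Real.sqrt (Y ω)) ^ 2
        rw [mul_pow, Real.sq_sqrt (hY0 ω)]; ring))
    have e1 : ∫ ω, Real.sqrt (Y ω) * (Y ω * Real.sqrt (Y ω)) ∂μ = s := by
      rw [hs_def]
      refine integral_congr_ae (Filter.Eventually.of_forall fun ω => ?_)
      show Real.sqrt (Y ω) * (Y ω * Real.sqrt (Y ω)) = Y ω ^ 2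
      have h' : Real.sqrt (Y ω) * (Y ω * Real.sqrt (Y ω)) = (Real.sqrt (Y ω))^2 * Y ω := by ring
      rw [h', Real.sq_sqrt (hY0 ω)]; ring
    have e2 : ∫ ω, Real.sqrt (Y ω) ^ 2 ∂μ = u := hu_def ▸
      integral_congr_ae (Filter.Eventually.of_forall fun ω => Real.sq_sqrt (hY0 ω))
    have e3 : ∫ ω, (Y ω * Real.sqrt (Y ω)) ^ 2 ∂μ = t := by
      rw [ht_def]
      refine integral_congr_ae (Filter.Eventually.of_forall fun ω => ?_)
      show (Y ω * Real.sqrt (Y ω)) ^ 2 = Y ω ^ 3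
      rw [mul_pow, Real.sq_sqrt (hY0 ω)]; ring
    rwa [e1, e2, e3] at h
  -- CS 2: t² ≤ s * ∫Y⁴ ≤ s * cσ⁴
  have hY4le : ∫ ω, Y ω ^ 4 ∂μ ≤ c * σ ^ 4 := by
    refine le_trans ?_ hE4'
    refine integral_mono hY4int h4 fun ω => ?_
    calc Y ω ^ 4 ≤ |X ω| ^ 4 := by
          simpa [abs_of_nonneg (hY0 ω)] using pow_le_pow_left₀ (abs_nonneg _) (hYabs ω) 4
      _ = X ω ^ 4 := by rw [← abs_pow, abs_of_nonneg (by positivity)]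
  have hcs2 : t ^ 2 ≤ s * (c * σ ^ 4) := by
    have h := cs_sq μ Y (fun ω => Y ω ^ 2) hY0 (fun ω => sq_nonneg _)
      hYm.aestronglyMeasurable (hYm.pow_const 2).aestronglyMeasurable hY2int
      (hY4int.congr (Filter.Eventually.of_forall fun ω => by
        show Y ω ^ 4 = (Y ω ^ 2) ^ 2; ring))
    have e1 : ∫ ω, Y ω * Y ω ^ 2 ∂μ = t := ht_def ▸
      integral_congr_ae (Filter.Eventually.of_forall fun ω => by
        show Y ω * Y ω ^ 2 = Y ω ^ 3; ring)
    have e2 : ∫ ω, (Y ω ^ 2) ^ 2 ∂μ = ∫ ω, Y ω ^ 4 ∂μ :=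
      integral_congr_ae (Filter.Eventually.of_forall fun ω => by
        show (Y ω ^ 2) ^ 2 = Y ω ^ 4; ring)
    rw [e1, e2, ← hs_def] at h
    calc t ^ 2 ≤ s * ∫ ω, Y ω ^ 4 ∂μ := h
      _ ≤ s * (c * σ ^ 4) := mul_le_mul_of_nonneg_left hY4le hs0
  -- arithmetic conclusion
  have ha2 : a ^ 2 * (4 * c) = σ ^ 2 := by
    have h2c : (2 * Real.sqrt c) ^ 2 = 4 * c := by
      rw [mul_pow, Real.sq_sqrt hc.le]; ring
    rw [ha_def, div_pow, h2c, div_mul_cancel₀]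
    positivity
  have hlow : σ ^ 2 ≤ a ^ 2 + s := by
    have h5 : a * u ≤ a ^ 2 := by
      calc a * u ≤ a * a := mul_le_mul_of_nonneg_left hua ha0.le
        _ = a ^ 2 := (sq a).symm
    linarith only [hsplit, hP2a, h5]
  exact key_arith σ s u t a c hσ hc hc1 hu0 hs0 ht0 hua ha0 hcs1 hcs2 ha2 hlow
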